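/- Under the hypotheses q ∣ N and M ∣ N, the extended width δ(𝔞) = [Mq,q²,N]/q² depends only on gcd(q, N): if q₁, q₂ ∣ N with gcd(q₁,N) = gcd(q₂,N) then δ at q₁ equals δ at q₂ (trivial), and more substantively if gcd(q₁, N) = gcd(q₂, N) as computed for arbitrary q₁, q₂ ∈ ℕ (not necessarily dividing N), then [Mq₁, q₁², N]/q₁² = [Mq₂, q₂², N]/q₂². -/
import Mathlib

lemma wid_fact (M N q : ℕ) (hM : 0 < M) (hN : 0 < N) (hq : 0 < q) (p : ℕ) :
    (Nat.lcm (M * q) (Nat.lcm (q ^ 2) N) / q ^ 2).factorization p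
      = max (M.factorization p + q.factorization p)
          (max (2 * q.factorization p) (N.factorization p)) - 2 * q.factorization p := by
  have hq2 : q ^ 2 ≠ 0 := by positivity
  have hMq : M * q ≠ 0 := by positivity
  have hL2 : Nat.lcm (q ^ 2) N ≠ 0 := Nat.lcm_ne_zero hq2 hN.ne'
  have hdvd : q ^ 2 ∣ Nat.lcm (M * q) (Nat.lcm (q ^ 2) N) :=
    dvd_trans (Nat.dvd_lcm_left _ _) (Nat.dvd_lcm_right _ _)
  rw [Nat.factorization_div hdvd, Nat.factorization_lcm hMq hL2,
    Nat.factorization_lcm hq2 hN.ne']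
  simp [Nat.factorization_mul hM.ne' hq.ne', Nat.factorization_pow, two_mul,
    Finsupp.sup_apply, Finsupp.tsub_apply]

/-- The extended width `δ(𝔞) = [Mq, q², N]/q²` depends only on the `p`-adic valuations of
`q` at primes `p ∣ N`: if `v_p(q₁) = v_p(q₂)` for all primes `p ∣ N`, then
`[Mq₁, q₁², N]/q₁² = [Mq₂, q₂², N]/q₂²`. -/
theorem extended_width_depends_on_gcd (M N q₁ q₂ : ℕ) (hM : 0 < M) (hN : 0 < N)
    (hq₁ : 0 < q₁) (hq₂ : 0 < q₂) (hMN : M ∣ N)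
    (h : ∀ p : ℕ, p.Prime → p ∣ N → q₁.factorization p = q₂.factorization p) :
    Nat.lcm (M * q₁) (Nat.lcm (q₁ ^ 2) N) / q₁ ^ 2
      = Nat.lcm (M * q₂) (Nat.lcm (q₂ ^ 2) N) / q₂ ^ 2 := by
  have key : ∀ q : ℕ, 0 < q → 0 < Nat.lcm (M * q) (Nat.lcm (q ^ 2) N) / q ^ 2 := by
    intro q hq
    have hdvd : q ^ 2 ∣ Nat.lcm (M * q) (Nat.lcm (q ^ 2) N) :=
      dvd_trans (Nat.dvd_lcm_left _ _) (Nat.dvd_lcm_right _ _)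
    have hL : Nat.lcm (M * q) (Nat.lcm (q ^ 2) N) ≠ 0 :=
      Nat.lcm_ne_zero (by positivity) (Nat.lcm_ne_zero (by positivity) hN.ne')
    exact Nat.div_pos (Nat.le_of_dvd (Nat.pos_of_ne_zero hL) hdvd) (by positivity)
  refine Nat.eq_of_factorization_eq (key q₁ hq₁).ne' (key q₂ hq₂).ne' fun p => ?_
  rw [wid_fact M N q₁ hM hN hq₁ p, wid_fact M N q₂ hM hN hq₂ p]
  by_cases hp : p.Prime
  · by_cases hpN : p ∣ N
    · rw [h p hp hpN]
    · have hNp : N.factorization p = 0 :=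
        Nat.factorization_eq_zero_of_not_dvd hpN
      have hMp : M.factorization p = 0 :=
        Nat.factorization_eq_zero_of_not_dvd (fun hd => hpN (hd.trans hMN))
      rw [hNp, hMp]
      omega
  · simp [Nat.factorization_eq_zero_of_not_prime _ hp]
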